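/- For a Kripke structure K = (S, S₀, T, l) with T total and the LTL encoding Φ_K = b̃₀ ∧ ⋀_{s∈S} G(s̃ ⇒ X(⋁_{(s,s')∈T} s̃')), a linear structure M over the propositions P satisfies Φ_K at time 0 if and only if M is a K-linear structure starting from the initial state b̃₀, provided distinct states of K have distinct labels and each label determines the state (the labeling l is injective, and each state formula s̃ is the full conjunction ⋀_{p∈l(s)} p ∧ ⋀_{p∉l(s)} ¬p). -/
import Mathlib


/- LTL in negation normal form (negation only on propositional variables), with
standard semantics over linear time structures `M : ℕ → Set P`. -/

inductive LTL (P : Type) : Type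
  | tt : LTL P
  | ff : LTL P
  | var : P → LTL P
  | nvar : P → LTL P
  | and : LTL P → LTL P → LTL P
  | or : LTL P → LTL P → LTL P
  | next : LTL P → LTL P
  | unt : LTL P → LTL P → LTL P   -- strong until U
  | wunt : LTL P → LTL P → LTL P  -- weak until W
  deriving DecidableEq

def Sat {P : Type} (M : ℕ → Set P) : LTL P → ℕ → Prop
  | .tt, _ => True
  | .ff, _ => False
  | .var p, i => p ∈ M i
  | .nvar p, i => p ∉ M i
  | .and a b, i => Sat M a i ∧ Sat M b i
  | .or a b, i => Sat M a i ∨ Sat M b i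
  | .next a, i => Sat M a (i + 1)
  | .unt a b, i => ∃ j, i ≤ j ∧ Sat M b j ∧ ∀ k, i ≤ k → k < j → Sat M a k
  | .wunt a b, i =>
      (∀ j, i ≤ j → Sat M a j) ∨ (∃ j, i ≤ j ∧ Sat M b j ∧ ∀ k, i ≤ k → k < j → Sat M a k)

def LTL.G {P : Type} (a : LTL P) : LTL P := .wunt a .ff
def LTL.F {P : Type} (a : LTL P) : LTL P := .unt .tt a

def bigAnd {P : Type} (l : List (LTL P)) : LTL P := l.foldr .and .tt
def bigOr {P : Type} (l : List (LTL P)) : LTL P := l.foldr .or .ff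

/- Encoding a finite Kripke structure K = (S, {s₀}, T, l) as the LTL formula
Φ_K = s̃₀ ∧ ⋀_{s∈S} G(s̃ ⇒ X(⋁_{(s,s')∈T} s̃')), where s̃ is the canonical complete
conjunction of literals determined by the label l(s). -/

variable {S P : Type} [Fintype S] [Fintype P] [DecidableEq P]

/-- s̃ : the complete conjunction ⋀_{p∈l(s)} p ∧ ⋀_{p∉l(s)} ¬p. -/
noncomputable def stateForm (l : S → Finset P) (s : S) : LTL P :=
  bigAnd ((Finset.univ : Finset P).toList.map
    (fun p => if p ∈ l s then LTL.var p else LTL.nvar p))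

/-- ¬s̃ as an NNF disjunction of literals. -/
noncomputable def negStateForm (l : S → Finset P) (s : S) : LTL P :=
  bigOr ((Finset.univ : Finset P).toList.map
    (fun p => if p ∈ l s then LTL.nvar p else LTL.var p))

lemma sat_bigAnd {P : Type} (M : ℕ → Set P) (L : List (LTL P)) (i : ℕ) :
    Sat M (bigAnd L) i ↔ ∀ a ∈ L, Sat M a i := by
  induction L with
  | nil => simp [bigAnd, Sat]
  | cons a L ih => simp [bigAnd, Sat] at ih ⊢; tauto

lemma sat_bigOr {P : Type} (M : ℕ → Set P) (L : List (LTL P)) (i : ℕ) :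
    Sat M (bigOr L) i ↔ ∃ a ∈ L, Sat M a i := by
  induction L with
  | nil => simp [bigOr, Sat]
  | cons a L ih =>
    show Sat M a i ∨ Sat M (bigOr L) i ↔ _
    rw [ih]
    simp only [List.mem_cons]
    constructor
    · rintro (h | ⟨b, hb, h⟩)
      · exact ⟨a, Or.inl rfl, h⟩
      · exact ⟨b, Or.inr hb, h⟩
    · rintro ⟨b, rfl | hb, h⟩
      · exact Or.inl h
      · exact Or.inr ⟨b, hb, h⟩

lemma sat_G {P : Type} (M : ℕ → Set P) (a : LTL P) (i : ℕ) :
    Sat M (LTL.G a) i ↔ ∀ j, i ≤ j → Sat M a j := by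
  simp [LTL.G, Sat]

lemma sat_stateForm {S P : Type} [Fintype P] [DecidableEq P] (M : ℕ → Set P)
    (l : S → Finset P) (s : S) (i : ℕ) :
    Sat M (stateForm l s) i ↔ M i = ↑(l s) := by
  rw [stateForm, sat_bigAnd]
  simp only [List.mem_map, Finset.mem_toList, Finset.mem_univ, true_and]
  constructor
  · intro h
    ext p
    have := h _ ⟨p, rfl⟩
    by_cases hp : p ∈ l s <;> simp [hp, Sat] at this <;> simp [hp, this]
  · rintro h a ⟨p, rfl⟩
    by_cases hp : p ∈ l s <;> simp [hp, Sat, h]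

lemma sat_negStateForm {S P : Type} [Fintype P] [DecidableEq P] (M : ℕ → Set P)
    (l : S → Finset P) (s : S) (i : ℕ) :
    Sat M (negStateForm l s) i ↔ M i ≠ ↑(l s) := by
  rw [negStateForm, sat_bigOr]
  simp only [List.mem_map, Finset.mem_toList, Finset.mem_univ, true_and]
  constructor
  · rintro ⟨a, ⟨p, rfl⟩, hsat⟩ h
    by_cases hp : p ∈ l s <;> simp [hp, Sat, h] at hsat <;> exact hsat hp
  · intro h
    have : ∃ p, ¬(p ∈ M i ↔ p ∈ l s) := by
      by_contra hc
      push_neg at hc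
      exact h (Set.ext fun p => by simpa using hc p)
    obtain ⟨p, hp⟩ := this
    refine ⟨_, ⟨p, rfl⟩, ?_⟩
    by_cases hpl : p ∈ l s <;> simp [hpl, Sat] <;> tauto


/-- Φ_K. -/
noncomputable def PhiK (s₀ : S) (T : S → S → Bool) (l : S → Finset P) : LTL P :=
  .and (stateForm l s₀)
    (bigAnd ((Finset.univ : Finset S).toList.map (fun s =>
      LTL.G (.or (negStateForm l s)
        (.next (bigOr (((Finset.univ : Finset S).toList.filter (fun s' => T s s')).map
          (stateForm l))))))))

/-- A linear structure satisfies Φ_K at time 0 iff it is a K-linear structure starting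
from the initial state s₀ (provided T is total and the labeling l is injective). -/
theorem stmt18 (s₀ : S) (T : S → S → Bool) (l : S → Finset P)
    (hTtotal : ∀ s, ∃ s', T s s' = true) (hlinj : Function.Injective l)
    (M : ℕ → Set P) :
    Sat M (PhiK s₀ T l) 0 ↔
      ∃ mp : ℕ → S, mp 0 = s₀ ∧ (∀ i, M i = ↑(l (mp i))) ∧
        ∀ i, T (mp i) (mp (i + 1)) = true := by
  constructor
  · rintro ⟨h0, hG⟩
    rw [sat_stateForm] at h0
    have key : ∀ i s, M i = ↑(l s) → ∃ s', T s s' = true ∧ M (i+1) = ↑(l s') := by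
      intro i s hs
      rw [sat_bigAnd] at hG
      have hmem : (LTL.G (.or (negStateForm l s)
          (.next (bigOr (((Finset.univ : Finset S).toList.filter
            (fun s' => T s s')).map (stateForm l)))))) ∈
          ((Finset.univ : Finset S).toList.map (fun s =>
            LTL.G (.or (negStateForm l s)
              (.next (bigOr (((Finset.univ : Finset S).toList.filter
                (fun s' => T s s')).map (stateForm l))))))) :=
        List.mem_map.2 ⟨s, Finset.mem_toList.2 (Finset.mem_univ s), rfl⟩
      have h := (sat_G M _ 0).1 (hG _ hmem) i (Nat.zero_le i)
      rcases h with h | h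
      · exact absurd hs ((sat_negStateForm M l s i).1 h)
      · have h' : Sat M (bigOr (((Finset.univ : Finset S).toList.filter
            (fun s' => T s s')).map (stateForm l))) (i+1) := h
        rw [sat_bigOr] at h'
        obtain ⟨a, ha, hsa⟩ := h'
        obtain ⟨s', hs', rfl⟩ := List.mem_map.1 ha
        exact ⟨s', by simpa using (List.mem_filter.1 hs').2,
          (sat_stateForm M l s' (i+1)).1 hsa⟩
    choose f hfT hfM using key
    let g : ∀ i : ℕ, {s : S // M i = ↑(l s)} := fun i =>
      Nat.rec ⟨s₀, h0⟩ (fun n p => ⟨f n p.1 p.2, hfM n p.1 p.2⟩) i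
    exact ⟨fun i => (g i).1, rfl, fun i => (g i).2, fun i => hfT i (g i).1 (g i).2⟩
  · rintro ⟨mp, h0, hM, hT⟩
    refine ⟨(sat_stateForm M l s₀ 0).2 (h0 ▸ hM 0), ?_⟩
    rw [sat_bigAnd]
    intro a ha
    obtain ⟨s, _, rfl⟩ := List.mem_map.1 ha
    rw [sat_G]
    intro j _
    show Sat M (negStateForm l s) j ∨ Sat M _ j
    by_cases hMs : M j = ↑(l s)
    · right
      show Sat M (bigOr _) (j+1)
      rw [sat_bigOr]
      have hs : s = mp j := hlinj (Finset.coe_injective (by rw [← hMs]; exact hM j))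
      refine ⟨stateForm l (mp (j+1)), List.mem_map.2 ⟨mp (j+1),
        List.mem_filter.2 ⟨Finset.mem_toList.2 (Finset.mem_univ _), ?_⟩, rfl⟩,
        (sat_stateForm M l _ _).2 (hM (j+1))⟩
      simp [hs, hT j]
    · exact Or.inl ((sat_negStateForm M l s j).2 hMs)
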